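/- Let Ξ = {0, 1, E, O, ⟨SEP⟩, ⟨EOS⟩}. For every w ∈ {0,1}* with n := #1(w), and for every proper prefix U of the trace string P₁ P₂ ⋯ P_{n+1} ⟨SEP⟩ P_{n+1} ⟨EOS⟩ (where P_k = E if k is odd and P_k = O if k is even), exactly one of the following four conditions holds for x := w · U: (a) Init(x), or (Flip(x) and x_last = O), or (x_last = ⟨SEP⟩ and x_prev = E); (b) (Flip(x) and x_last = E), or (x_last = ⟨SEP⟩ and x_prev = O); (c) EmitSEP(x); (d) EmitEOS(x). Hence exactly one OUTPUT clause of the PARITY program is active at every autoregressive step. -/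

import Mathlib

/-- The alphabet for the PARITY chain of thought:
input bits `0`, `1`, parity states `E` (even), `O` (odd), and the distinguished symbols
`⟨SEP⟩` and `⟨EOS⟩`. -/
inductive PTok : Type
  | zero : PTok
  | one : PTok
  | E : PTok
  | O : PTok
  | SEP : PTok
  | EOS : PTok
deriving DecidableEq

instance instFintypePTok : Fintype PTok where
  elems := {PTok.zero, PTok.one, PTok.E, PTok.O, PTok.SEP, PTok.EOS}
  complete := fun x => by cases x <;> simp

/-- `Generates M w U`: the next-token map `M` generates the string `U` on input `w`. -/
def Generates (M : List PTok → PTok) (w U : List PTok) : Prop :=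
  ∀ (k : ℕ) (h : k < U.length), M (w ++ U.take k) = U.get ⟨k, h⟩

/-- `C_par(x)`: the number of parity-state tokens (`E` or `O`) in `x`. -/
def countPar (x : List PTok) : ℕ := x.count PTok.E + x.count PTok.O

/-- Initial phase: no parity-state token and no separator generated yet. -/
def InitP (x : List PTok) : Prop := countPar x = 0 ∧ x.count PTok.SEP = 0

/-- Flipping phase: between `1` and `#1(x)` parity tokens produced, no separator yet. -/
def Flip (x : List PTok) : Prop :=
  1 ≤ countPar x ∧ countPar x ≤ x.count PTok.one ∧ x.count PTok.SEP = 0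

/-- Emit the separator: exactly `#1(x) + 1` parity tokens produced, no separator yet. -/
def EmitSEP (x : List PTok) : Prop :=
  countPar x = x.count PTok.one + 1 ∧ x.count PTok.SEP = 0

/-- Emit `⟨EOS⟩`: the last symbol is `E` or `O` and the second-to-last is `⟨SEP⟩`. -/
def EmitEOS (x : List PTok) : Prop :=
  (x.getLast? = some PTok.E ∨ x.getLast? = some PTok.O) ∧
    x.dropLast.getLast? = some PTok.SEP

instance : DecidablePred InitP := fun x => by unfold InitP; infer_instance
instance : DecidablePred Flip := fun x => by unfold Flip; infer_instance
instance : DecidablePred EmitSEP := fun x => by unfold EmitSEP; infer_instance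
instance : DecidablePred EmitEOS := fun x => by unfold EmitEOS; infer_instance

/-- The PARITY next-token map. -/
def parityM (x : List PTok) : PTok :=
  if InitP x ∨ (Flip x ∧ x.getLast? = some PTok.O) ∨
      (x.getLast? = some PTok.SEP ∧ x.dropLast.getLast? = some PTok.E) then PTok.E
  else if (Flip x ∧ x.getLast? = some PTok.E) ∨
      (x.getLast? = some PTok.SEP ∧ x.dropLast.getLast? = some PTok.O) then PTok.O
  else if EmitSEP x then PTok.SEP
  else if EmitEOS x then PTok.EOS
  else PTok.zero

/-- `P k`: the `k`-th parity-state token (1-indexed): `E` if `k` is odd, `O` if even. -/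
def parTok (k : ℕ) : PTok := if k % 2 = 1 then PTok.E else PTok.O

/-- The full PARITY chain-of-thought trace `P₁ P₂ ⋯ P_{n+1} ⟨SEP⟩ P_{n+1} ⟨EOS⟩` for an
input containing `n` ones. -/
def parityTrace (n : ℕ) : List PTok :=
  (List.range (n + 1)).map (fun i => parTok (i + 1)) ++
    [PTok.SEP, parTok (n + 1), PTok.EOS]

/-- Clause (a) of the PARITY program: output `E`. -/
def ClauseE (x : List PTok) : Prop :=
  InitP x ∨ (Flip x ∧ x.getLast? = some PTok.O) ∨
    (x.getLast? = some PTok.SEP ∧ x.dropLast.getLast? = some PTok.E)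

/-- Clause (b) of the PARITY program: output `O`. -/
def ClauseO (x : List PTok) : Prop :=
  (Flip x ∧ x.getLast? = some PTok.E) ∨
    (x.getLast? = some PTok.SEP ∧ x.dropLast.getLast? = some PTok.O)

/-- Auxiliary: the list of the first `k` parity tokens. -/
def parList (k : ℕ) : List PTok := (List.range k).map (fun i => parTok (i + 1))

lemma parTok_cases (k : ℕ) : parTok k = PTok.E ∨ parTok k = PTok.O := by
  unfold parTok; split <;> simp

lemma countPar_append (a b : List PTok) :
    countPar (a ++ b) = countPar a + countPar b := by
  simp [countPar, List.count_append]; ring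

lemma parList_succ (k : ℕ) : parList (k + 1) = parList k ++ [parTok (k + 1)] := by
  simp [parList, List.range_succ]

lemma parList_counts (k : ℕ) :
    countPar (parList k) = k ∧ (parList k).count PTok.one = 0 ∧
      (parList k).count PTok.SEP = 0 := by
  induction k with
  | zero => simp [countPar, parList]
  | succ k ih =>
    obtain ⟨h1, h2, h3⟩ := ih
    rw [parList_succ]
    refine ⟨?_, ?_, ?_⟩
    · rw [countPar_append, h1]
      rcases parTok_cases (k + 1) with h | h <;> simp [countPar, h]
    · rw [List.count_append, h2]
      rcases parTok_cases (k + 1) with h | h <;> simp [h]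
    · rw [List.count_append, h3]
      rcases parTok_cases (k + 1) with h | h <;> simp [h]

lemma w_counts (w : List PTok) (hw : ∀ a ∈ w, a = PTok.zero ∨ a = PTok.one) :
    countPar w = 0 ∧ w.count PTok.SEP = 0 := by
  have hE : w.count PTok.E = 0 :=
    List.count_eq_zero.mpr (fun h => by rcases hw _ h with h | h <;> simp_all)
  have hO : w.count PTok.O = 0 :=
    List.count_eq_zero.mpr (fun h => by rcases hw _ h with h | h <;> simp_all)
  have hS : w.count PTok.SEP = 0 :=
    List.count_eq_zero.mpr (fun h => by rcases hw _ h with h | h <;> simp_all)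
  exact ⟨by simp [countPar, hE, hO], hS⟩

lemma w_getLast (w : List PTok) (hw : ∀ a ∈ w, a = PTok.zero ∨ a = PTok.one)
    (t : PTok) (h : w.getLast? = some t) : t = PTok.zero ∨ t = PTok.one := by
  rcases List.mem_getLast?_eq_getLast (l := w) (x := t) h with ⟨hne, rfl⟩
  exact hw _ (List.getLast_mem hne)

lemma parityTrace_take (n k : ℕ) (hk : k ≤ n + 1) :
    (parityTrace n).take k = parList k := by
  rw [parityTrace]
  rw [List.take_append_of_le_length (by simp [hk])]
  simp [parList, ← List.map_take, List.take_range, Nat.min_eq_left hk]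

lemma parityTrace_take2 (n : ℕ) :
    (parityTrace n).take (n + 2) = parList (n + 1) ++ [PTok.SEP] := by
  have h : n + 2 = ((List.range (n + 1)).map (fun i => parTok (i + 1))).length + 1 := by simp
  rw [parityTrace, h, List.take_append]
  simp [parList, List.take_of_length_le]

lemma parityTrace_take3 (n : ℕ) :
    (parityTrace n).take (n + 3) = parList (n + 1) ++ [PTok.SEP, parTok (n + 1)] := by
  have h : n + 3 = ((List.range (n + 1)).map (fun i => parTok (i + 1))).length + 2 := by simp
  rw [parityTrace, h, List.take_append]
  simp [parList, List.take_of_length_le]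

/-- **Exactly one OUTPUT clause of the PARITY program is active at every step.**
For every input `w ∈ {0,1}*` with `n` ones and every proper prefix `U` of the trace
`P₁ ⋯ P_{n+1} ⟨SEP⟩ P_{n+1} ⟨EOS⟩`, exactly one of the four clauses (a) `ClauseE`,
(b) `ClauseO`, (c) `EmitSEP`, (d) `EmitEOS` holds of `x := w ++ U`. -/
theorem parity_exactly_one_clause (w : List PTok)
    (hw : ∀ a ∈ w, a = PTok.zero ∨ a = PTok.one)
    (U : List PTok) (hU : U <+: parityTrace (w.count PTok.one))
    (hproper : U ≠ parityTrace (w.count PTok.one)) :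
    (ClauseE (w ++ U) ∧ ¬ClauseO (w ++ U) ∧ ¬EmitSEP (w ++ U) ∧ ¬EmitEOS (w ++ U)) ∨
    (¬ClauseE (w ++ U) ∧ ClauseO (w ++ U) ∧ ¬EmitSEP (w ++ U) ∧ ¬EmitEOS (w ++ U)) ∨
    (¬ClauseE (w ++ U) ∧ ¬ClauseO (w ++ U) ∧ EmitSEP (w ++ U) ∧ ¬EmitEOS (w ++ U)) ∨
    (¬ClauseE (w ++ U) ∧ ¬ClauseO (w ++ U) ∧ ¬EmitSEP (w ++ U) ∧ EmitEOS (w ++ U)) := by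
  set n := w.count PTok.one with hn
  obtain ⟨hwP, hwS⟩ := w_counts w hw
  have hlen : (parityTrace n).length = n + 4 := by simp [parityTrace]
  rw [List.prefix_iff_eq_take] at hU
  have hklt : U.length < n + 4 := by
    by_contra h
    push_neg at h
    exact hproper (by rw [hU, List.take_of_length_le (by omega)])
  obtain ⟨k, hklt, hU⟩ : ∃ k, k < n + 4 ∧ U = (parityTrace n).take k :=
    ⟨U.length, hklt, hU⟩
  subst hU
  rcases Nat.lt_or_ge k (n + 2) with hsmall | hbig
  · -- k ≤ n + 1 : prefix within parity-token block
    rw [parityTrace_take n k (by omega)]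
    rcases Nat.eq_zero_or_pos k with hk0 | hkpos
    · -- k = 0 : Init
      subst hk0
      simp only [parList, List.range_zero, List.map_nil, List.append_nil]
      refine Or.inl ⟨Or.inl ⟨hwP, hwS⟩, ?_, ?_, ?_⟩
      · rintro (⟨⟨h1, _, _⟩, _⟩ | ⟨hl, _⟩)
        · omega
        · rcases w_getLast w hw _ hl with h | h <;> simp_all
      · rintro ⟨h1, _⟩; omega
      · rintro ⟨(hl | hl), _⟩ <;> rcases w_getLast w hw _ hl with h | h <;> simp_all
    · -- k = j + 1 with j + 1 ≤ n + 1
      obtain ⟨j, rfl⟩ : ∃ j, k = j + 1 := ⟨k - 1, by omega⟩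
      rw [parList_succ, ← List.append_assoc]
      set y := w ++ parList j with hy
      have hyP : countPar y = j := by
        rw [hy, countPar_append, hwP, (parList_counts j).1]; omega
      have hyone : y.count PTok.one = n := by
        rw [hy, List.count_append, (parList_counts j).2.1, ← hn]; omega
      have hySEP : y.count PTok.SEP = 0 := by
        rw [hy, List.count_append, (parList_counts j).2.2, hwS]
      have hylast : y.getLast? ≠ some PTok.SEP := by
        rw [hy]
        cases j with
        | zero =>
          simp only [parList, List.range_zero, List.map_nil, List.append_nil]
          intro h; rcases w_getLast w hw _ h with h | h <;> simp_all
        | succ j =>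
          rw [parList_succ, ← List.append_assoc, List.getLast?_concat]
          rcases parTok_cases (j + 1) with h | h <;> simp [h]
      have hxP : countPar (y ++ [parTok (j + 1)]) = j + 1 := by
        rw [countPar_append, hyP]
        rcases parTok_cases (j + 1) with h | h <;> simp [countPar, h]
      have hxone : (y ++ [parTok (j + 1)]).count PTok.one = n := by
        rcases parTok_cases (j + 1) with h | h <;>
          simp [List.count_append, hyone, h]
      have hxSEP : (y ++ [parTok (j + 1)]).count PTok.SEP = 0 := by
        rcases parTok_cases (j + 1) with h | h <;>
          simp [List.count_append, hySEP, h]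
      have hxlast : (y ++ [parTok (j + 1)]).getLast? = some (parTok (j + 1)) :=
        List.getLast?_concat
      have hxdrop : (y ++ [parTok (j + 1)]).dropLast = y := List.dropLast_concat
      have hnEOS : ¬EmitEOS (y ++ [parTok (j + 1)]) := by
        rintro ⟨_, h2⟩; rw [hxdrop] at h2; exact hylast h2
      rcases Nat.lt_or_ge (j + 1) (n + 1) with hflip | hemit
      · -- Flip phase
        have hF : Flip (y ++ [parTok (j + 1)]) := by
          refine ⟨by omega, by rw [hxP, hxone]; omega, hxSEP⟩
        have hnS : ¬EmitSEP (y ++ [parTok (j + 1)]) := by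
          rintro ⟨h1, _⟩; rw [hxP, hxone] at h1; omega
        rcases parTok_cases (j + 1) with hpe | hpo
        · -- last = E : clause O
          refine Or.inr (Or.inl ⟨?_, Or.inl ⟨hF, by rw [hxlast, hpe]⟩, hnS, hnEOS⟩)
          rintro (⟨h1, _⟩ | ⟨_, h2⟩ | ⟨h1, _⟩)
          · rw [hxP] at h1; omega
          · rw [hxlast, hpe] at h2; simp at h2
          · rw [hxlast, hpe] at h1; simp at h1
        · -- last = O : clause E
          refine Or.inl ⟨Or.inr (Or.inl ⟨hF, by rw [hxlast, hpo]⟩), ?_, hnS, hnEOS⟩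
          rintro (⟨_, h2⟩ | ⟨h1, _⟩)
          · rw [hxlast, hpo] at h2; simp at h2
          · rw [hxlast, hpo] at h1; simp at h1
      · -- EmitSEP phase : j + 1 = n + 1
        refine Or.inr (Or.inr (Or.inl ⟨?_, ?_, ⟨by rw [hxP, hxone]; omega, hxSEP⟩, hnEOS⟩))
        · rintro (⟨h1, _⟩ | ⟨⟨_, h2, _⟩, _⟩ | ⟨h1, _⟩)
          · rw [hxP] at h1; omega
          · rw [hxP, hxone] at h2; omega
          · rw [hxlast] at h1
            rcases parTok_cases (j + 1) with h | h <;> simp [h] at h1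
        · rintro (⟨⟨_, h2, _⟩, _⟩ | ⟨h1, _⟩)
          · rw [hxP, hxone] at h2; omega
          · rw [hxlast] at h1
            rcases parTok_cases (j + 1) with h | h <;> simp [h] at h1
  · -- k = n + 2 or k = n + 3
    have hyP : countPar (w ++ parList (n + 1)) = n + 1 := by
      rw [countPar_append, hwP, (parList_counts (n + 1)).1]; omega
    have hyone : (w ++ parList (n + 1)).count PTok.one = n := by
      rw [List.count_append, (parList_counts (n + 1)).2.1, ← hn]; omega
    have hySEP : (w ++ parList (n + 1)).count PTok.SEP = 0 := by
      rw [List.count_append, (parList_counts (n + 1)).2.2, hwS]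
    have hylast : (w ++ parList (n + 1)).getLast? = some (parTok (n + 1)) := by
      rw [parList_succ, ← List.append_assoc, List.getLast?_concat]
    set y := w ++ parList (n + 1) with hy
    rcases Nat.lt_or_ge k (n + 3) with h2 | h3
    · -- k = n + 2 : just after SEP
      obtain rfl : k = n + 2 := by omega
      rw [parityTrace_take2, ← List.append_assoc, ← hy]
      have hxSEP : (y ++ [PTok.SEP]).count PTok.SEP = 1 := by
        simp [List.count_append, hySEP]
      have hxlast : (y ++ [PTok.SEP]).getLast? = some PTok.SEP := List.getLast?_concat
      have hxdrop : (y ++ [PTok.SEP]).dropLast = y := List.dropLast_concat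
      have hnI : ¬InitP (y ++ [PTok.SEP]) := by rintro ⟨_, h⟩; rw [hxSEP] at h; omega
      have hnF : ¬Flip (y ++ [PTok.SEP]) := by rintro ⟨_, _, h⟩; rw [hxSEP] at h; omega
      have hnS : ¬EmitSEP (y ++ [PTok.SEP]) := by rintro ⟨_, h⟩; rw [hxSEP] at h; omega
      have hnEOS : ¬EmitEOS (y ++ [PTok.SEP]) := by
        rintro ⟨(h | h), _⟩ <;> rw [hxlast] at h <;> simp at h
      rcases parTok_cases (n + 1) with hpe | hpo
      · refine Or.inl ⟨Or.inr (Or.inr ⟨hxlast, by rw [hxdrop, hylast, hpe]⟩), ?_, hnS, hnEOS⟩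
        rintro (⟨hF, _⟩ | ⟨_, h⟩)
        · exact hnF hF
        · rw [hxdrop, hylast, hpe] at h; simp at h
      · refine Or.inr (Or.inl ⟨?_, Or.inr ⟨hxlast, by rw [hxdrop, hylast, hpo]⟩, hnS, hnEOS⟩)
        rintro (hI | ⟨hF, _⟩ | ⟨_, h⟩)
        · exact hnI hI
        · exact hnF hF
        · rw [hxdrop, hylast, hpo] at h; simp at h
    · -- k = n + 3 : EmitEOS
      obtain rfl : k = n + 3 := by omega
      have hre : parList (n + 1) ++ [PTok.SEP, parTok (n + 1)]
          = (parList (n + 1) ++ [PTok.SEP]) ++ [parTok (n + 1)] := by simp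
      rw [parityTrace_take3, hre, ← List.append_assoc, ← List.append_assoc, ← hy]
      set z := y ++ [PTok.SEP] with hz
      have hzSEP : z.count PTok.SEP = 1 := by simp [hz, List.count_append, hySEP]
      have hxSEP : (z ++ [parTok (n + 1)]).count PTok.SEP = 1 := by
        rcases parTok_cases (n + 1) with h | h <;> simp [List.count_append, hzSEP, h]
      have hxlast : (z ++ [parTok (n + 1)]).getLast? = some (parTok (n + 1)) :=
        List.getLast?_concat
      have hxdrop : (z ++ [parTok (n + 1)]).dropLast = z := List.dropLast_concat
      have hzlast : z.getLast? = some PTok.SEP := List.getLast?_concat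
      have hEOS : EmitEOS (z ++ [parTok (n + 1)]) := by
        refine ⟨?_, by rw [hxdrop, hzlast]⟩
        rcases parTok_cases (n + 1) with h | h <;> rw [hxlast, h] <;> simp
      have hlastne : (z ++ [parTok (n + 1)]).getLast? ≠ some PTok.SEP := by
        rw [hxlast]; rcases parTok_cases (n + 1) with h | h <;> simp [h]
      refine Or.inr (Or.inr (Or.inr ⟨?_, ?_, ?_, hEOS⟩))
      · rintro (⟨_, h⟩ | ⟨⟨_, _, h⟩, _⟩ | ⟨h, _⟩)
        · rw [hxSEP] at h; omega
        · rw [hxSEP] at h; omega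
        · exact hlastne h
      · rintro (⟨⟨_, _, h⟩, _⟩ | ⟨h, _⟩)
        · rw [hxSEP] at h; omega
        · exact hlastne h
      · rintro ⟨_, h⟩; rw [hxSEP] at h; omega
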